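/- arXiv:1705.10502 — 2 statements merged into one kernel-verified Lean document; each statement's English description precedes it below -/
import Mathlib

section
/- Let C and D be idempotent-complete pretriangulated categories with weight structures, and let g_* : C → D and g^* : D → C be weight-exact exact functors together with natural transformations η : id_C → g^* ∘ g_* and ε : g^* ∘ g_* → id_C satisfying ε ∘ η = id (so every object N of C is naturally a direct factor of g^* g_* N). Then g_* is weight-conservative: for every N ∈ C and all integers α ≤ β, (a) N lies in the heart C_{w=0} if and only if g_* N lies in the heart D_{w=0}; (b) N ∈ C_{w≤α} if and only if g_* N ∈ D_{w≤α}; (c) N ∈ C_{w≥β} if and only if g_* N ∈ D_{w≥β}; (d) N is without weights α, α+1, …, β if and only if g_* N is without weights α, α+1, …, β. (Proposition 2O, abstract form; the paper applies it with g a finite étale morphism of schemes, C, D the categories of constructible Beilinson motives, and g_*, g^* the direct and inverse image functors.) -/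
set_option linter.unusedVariables false

open CategoryTheory Limits Pretriangulated

universe w₁ w₂ w₃ w₄ v₁ v₂ v₃ v₄ u₁ u₂ u₃ u₄

/-- A weight structure on a pretriangulated category `C`: a pair of classes of objects
`(C_{w≤0}, C_{w≥0})`, each containing the zero objects and closed under isomorphisms and
retracts (direct summands), such that `C_{w≤0}[-1] ⊆ C_{w≤0}`, `C_{w≥0}[1] ⊆ C_{w≥0}`,
`Hom(A, B[1]) = 0` for `A ∈ C_{w≤0}`, `B ∈ C_{w≥0}`, and every object admits a weight
filtration. -/
structure WeightStructure (C : Type*) [Category C] [HasZeroObject C] [Preadditive C]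
    [HasShift C ℤ] [∀ n : ℤ, (shiftFunctor C n).Additive] [Pretriangulated C] where
  le : C → Prop
  ge : C → Prop
  le_zero : ∀ X : C, IsZero X → le X
  ge_zero : ∀ X : C, IsZero X → ge X
  le_iso : ∀ {X Y : C}, (X ≅ Y) → le X → le Y
  ge_iso : ∀ {X Y : C}, (X ≅ Y) → ge X → ge Y
  le_retract : ∀ {X Y : C} (s : X ⟶ Y) (r : Y ⟶ X), s ≫ r = 𝟙 X → le Y → le X
  ge_retract : ∀ {X Y : C} (s : X ⟶ Y) (r : Y ⟶ X), s ≫ r = 𝟙 X → ge Y → ge X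
  le_shift : ∀ X : C, le X → le (X⟦(-1 : ℤ)⟧)
  ge_shift : ∀ X : C, ge X → ge (X⟦(1 : ℤ)⟧)
  orth : ∀ {A B : C} (f : A ⟶ B⟦(1 : ℤ)⟧), le A → ge B → f = 0
  exists_weight_filtration : ∀ M : C, ∃ (A B : C) (f : A ⟶ M) (g : M ⟶ B)
    (h : B ⟶ A⟦(1 : ℤ)⟧), (Triangle.mk f g h ∈ distTriang C) ∧ le A ∧ ge (B⟦(-1 : ℤ)⟧)

namespace WeightStructure

variable {C : Type*} [Category C] [HasZeroObject C] [Preadditive C]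
    [HasShift C ℤ] [∀ n : ℤ, (shiftFunctor C n).Additive] [Pretriangulated C]

/-- `X ∈ C_{w ≤ n}`, i.e. `X[-n] ∈ C_{w ≤ 0}`. -/
def leW (w : WeightStructure C) (n : ℤ) (X : C) : Prop := w.le (X⟦(-n : ℤ)⟧)

/-- `X ∈ C_{w ≥ n}`, i.e. `X[-n] ∈ C_{w ≥ 0}`. -/
def geW (w : WeightStructure C) (n : ℤ) (X : C) : Prop := w.ge (X⟦(-n : ℤ)⟧)

/-- The heart `C_{w = 0}`. -/
def heart (w : WeightStructure C) (X : C) : Prop := w.le X ∧ w.ge X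

/-- `M` is without weights `m, …, n`: there is a distinguished triangle
`M_{≤ m-1} → M → M_{≥ n+1} → M_{≤ m-1}[1]` with `M_{≤ m-1} ∈ C_{w ≤ m-1}` and
`M_{≥ n+1} ∈ C_{w ≥ n+1}` (a weight filtration avoiding weights `m, …, n`). -/
def WithoutWeights (w : WeightStructure C) (m n : ℤ) (M : C) : Prop :=
  ∃ (A B : C) (f : A ⟶ M) (g : M ⟶ B) (h : B ⟶ A⟦(1 : ℤ)⟧),
    (Triangle.mk f g h ∈ distTriang C) ∧ w.leW (m - 1) A ∧ w.geW (n + 1) B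

end WeightStructure

/-- A weight-exact (exact) functor between pretriangulated categories equipped with
weight structures: `F(C_{w≤0}) ⊆ D_{w≤0}` and `F(C_{w≥0}) ⊆ D_{w≥0}`. -/
def WeightExact {C : Type*} [Category C] [HasZeroObject C] [Preadditive C]
    [HasShift C ℤ] [∀ n : ℤ, (shiftFunctor C n).Additive] [Pretriangulated C]
    {D : Type*} [Category D] [HasZeroObject D] [Preadditive D]
    [HasShift D ℤ] [∀ n : ℤ, (shiftFunctor D n).Additive] [Pretriangulated D]
    (wC : WeightStructure C) (wD : WeightStructure D) (F : C ⥤ D) : Prop :=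
  (∀ X : C, wC.le X → wD.le (F.obj X)) ∧ (∀ X : C, wC.ge X → wD.ge (F.obj X))

namespace WeightStructure

section Helpers

variable {C : Type*} [Category C] [HasZeroObject C] [Preadditive C]
    [HasShift C ℤ] [∀ n : ℤ, (shiftFunctor C n).Additive] [Pretriangulated C]
    (w : WeightStructure C)

lemma le_shift_nat (k : ℕ) (X : C) (h : w.le X) : w.le (X⟦(-(k : ℤ))⟧) := by
  induction k with
  | zero =>
    have e : (-((0 : ℕ) : ℤ)) = 0 := by simp
    rw [e]
    exact w.le_iso ((shiftFunctorZero C ℤ).app X).symm h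
  | succ k ih =>
    have e : (-(((k + 1 : ℕ)) : ℤ)) = (-(k : ℤ)) + (-1) := by push_cast; ring
    rw [e]
    exact w.le_iso ((shiftFunctorAdd C (-(k : ℤ)) (-1)).app X).symm
      (w.le_shift _ ih)

lemma ge_shift_nat (k : ℕ) (X : C) (h : w.ge X) : w.ge (X⟦((k : ℤ))⟧) := by
  induction k with
  | zero =>
    have e : (((0 : ℕ) : ℤ)) = 0 := by simp
    rw [e]
    exact w.ge_iso ((shiftFunctorZero C ℤ).app X).symm h
  | succ k ih =>
    have e : ((((k + 1 : ℕ)) : ℤ)) = ((k : ℤ)) + 1 := by push_cast; ring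
    rw [e]
    exact w.ge_iso ((shiftFunctorAdd C ((k : ℤ)) 1).app X).symm
      (w.ge_shift _ ih)

lemma le_shift_int {n : ℤ} (hn : n ≤ 0) (X : C) (h : w.le X) : w.le (X⟦n⟧) := by
  have e : (-(((-n).toNat : ℕ) : ℤ)) = n := by omega
  rw [← e]
  exact w.le_shift_nat _ X h

lemma ge_shift_int {n : ℤ} (hn : 0 ≤ n) (X : C) (h : w.ge X) : w.ge (X⟦n⟧) := by
  have e : ((((n).toNat : ℕ) : ℤ)) = n := by omega
  rw [← e]
  exact w.ge_shift_nat _ X h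

lemma leW_mono {a a' : ℤ} (h : a ≤ a') {X : C} (hX : w.leW a X) : w.leW a' X := by
  have h1 : w.le ((X⟦(-a : ℤ)⟧)⟦a - a'⟧) := w.le_shift_int (by omega) _ hX
  exact w.le_iso ((shiftFunctorAdd' C (-a) (a - a') (-a') (by ring)).app X).symm h1

lemma geW_anti {b' b : ℤ} (h : b' ≤ b) {X : C} (hX : w.geW b X) : w.geW b' X := by
  have h1 : w.ge ((X⟦(-b : ℤ)⟧)⟦b - b'⟧) := w.ge_shift_int (by omega) _ hX
  exact w.ge_iso ((shiftFunctorAdd' C (-b) (b - b') (-b') (by ring)).app X).symm h1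

lemma hom_orth {a b : ℤ} (hab : a < b) {X Y : C} (hX : w.leW a X) (hY : w.geW b Y)
    (f : X ⟶ Y) : f = 0 := by
  have hY' : w.geW (a + 1) Y := w.geW_anti (by omega) hY
  have hiso := (shiftFunctorAdd' C (-(a + 1)) 1 (-a) (by ring)).app Y
  -- hiso : Y⟦-a⟧ ≅ (Y⟦-(a+1)⟧)⟦1⟧
  have h0 : (shiftFunctor C (-a : ℤ)).map f ≫ hiso.hom = 0 :=
    w.orth ((shiftFunctor C (-a : ℤ)).map f ≫ hiso.hom) hX hY'
  have h1 : (shiftFunctor C (-a : ℤ)).map f = 0 := by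
    have := h0 =≫ hiso.inv
    simpa using this
  apply (shiftFunctor C (-a : ℤ)).map_injective
  rw [h1, Functor.map_zero]

lemma leW_iso {a : ℤ} {X Y : C} (e : X ≅ Y) (h : w.leW a X) : w.leW a Y :=
  w.le_iso ((shiftFunctor C (-a : ℤ)).mapIso e) h

lemma geW_iso {b : ℤ} {X Y : C} (e : X ≅ Y) (h : w.geW b X) : w.geW b Y :=
  w.ge_iso ((shiftFunctor C (-b : ℤ)).mapIso e) h

lemma leW_retract {a : ℤ} {X Y : C} (s : X ⟶ Y) (r : Y ⟶ X) (hsr : s ≫ r = 𝟙 X)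
    (h : w.leW a Y) : w.leW a X :=
  w.le_retract ((shiftFunctor C (-a : ℤ)).map s) ((shiftFunctor C (-a : ℤ)).map r)
    (by rw [← Functor.map_comp, hsr, CategoryTheory.Functor.map_id]) h

lemma geW_retract {b : ℤ} {X Y : C} (s : X ⟶ Y) (r : Y ⟶ X) (hsr : s ≫ r = 𝟙 X)
    (h : w.geW b Y) : w.geW b X :=
  w.ge_retract ((shiftFunctor C (-b : ℤ)).map s) ((shiftFunctor C (-b : ℤ)).map r)
    (by rw [← Functor.map_comp, hsr, CategoryTheory.Functor.map_id]) h

lemma leW_shift_one {a : ℤ} {X : C} (h : w.leW a X) : w.leW (a + 1) (X⟦(1 : ℤ)⟧) :=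
  w.le_iso ((shiftFunctorAdd' C (1 : ℤ) (-(a + 1)) (-a) (by ring)).app X) h

/-- Weight decomposition at an arbitrary level `k`. -/
lemma exists_decomp (k : ℤ) (M : C) :
    ∃ (X Y : C) (f : X ⟶ M) (g : M ⟶ Y) (h : Y ⟶ X⟦(1 : ℤ)⟧),
      (Triangle.mk f g h ∈ distTriang C) ∧ w.leW k X ∧ w.geW (k + 1) Y := by
  obtain ⟨A, B, f, g, h, hT, hA, hB⟩ := w.exists_weight_filtration (M⟦(-k : ℤ)⟧)
  have hST := Pretriangulated.Triangle.shift_distinguished _ hT k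
  set ST := (CategoryTheory.shiftFunctor (Triangle C) k).obj (Triangle.mk f g h) with hSTdef
  let em : ST.obj₂ ≅ M := (shiftFunctorCompIsoId C (-k : ℤ) k (by ring)).app M
  refine ⟨ST.obj₁, ST.obj₃, ST.mor₁ ≫ em.hom, em.inv ≫ ST.mor₂, ST.mor₃, ?_, ?_, ?_⟩
  · refine isomorphic_distinguished _ hST _ ?_
    exact Triangle.isoMk _ _ (Iso.refl _) em.symm (Iso.refl _)
      (by change (ST.mor₁ ≫ em.hom) ≫ em.inv = 𝟙 ST.obj₁ ≫ ST.mor₁; simp)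
      (by change (em.inv ≫ ST.mor₂) ≫ 𝟙 ST.obj₃ = em.inv ≫ ST.mor₂; simp)
      (by change ST.mor₃ ≫ (shiftFunctor C (1 : ℤ)).map (𝟙 ST.obj₁) = 𝟙 ST.obj₃ ≫ ST.mor₃; simp)
  · -- ST.obj₁ = A⟦k⟧
    exact w.le_iso ((shiftFunctorCompIsoId C k (-k : ℤ) (by ring)).app A).symm hA
  · -- ST.obj₃ = B⟦k⟧ ; need ge (B⟦k⟧⟦-(k+1)⟧), have ge (B⟦-1⟧)
    exact w.ge_iso ((shiftFunctorAdd' C k (-(k + 1)) (-1) (by ring)).app B) hB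

/-- If `Z` receives no nonzero map from `C_{w ≤ b-1}`, then `Z ∈ C_{w ≥ b}`. -/
lemma ge_of_orth (b : ℤ) (Z : C)
    (hZ : ∀ (W : C), w.leW (b - 1) W → ∀ φ : W ⟶ Z, φ = 0) : w.geW b Z := by
  obtain ⟨P, Q, f, g, h, hT, hP, hQ⟩ := w.exists_decomp (b - 1) Z
  have hf : f = 0 := hZ P hP f
  obtain ⟨r, hr⟩ : ∃ r : Q ⟶ Z, 𝟙 Z = g ≫ r :=
    Pretriangulated.Triangle.yoneda_exact₂ _ hT (𝟙 Z)
    (by change f ≫ 𝟙 Z = 0; rw [hf, zero_comp])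
  have : w.geW (b - 1 + 1) Z := w.geW_retract g r hr.symm hQ
  have e : b - 1 + 1 = b := by ring
  rwa [e] at this

/-- A retract of an object without weights `m, …, n` is without weights `m, …, n`. -/
lemma withoutWeights_of_retract [IsIdempotentComplete C]
    {m n : ℤ} (hmn : m ≤ n) {N M : C} (i : N ⟶ M) (p : M ⟶ N) (hip : i ≫ p = 𝟙 N)
    (hM : w.WithoutWeights m n M) : w.WithoutWeights m n N := by
  obtain ⟨A', B', f', g', h', hT, hA', hB'⟩ := hM
  -- lift the idempotent `p ≫ i` on `M` to `A'`
  have hpi : (p ≫ i) ≫ (p ≫ i) = p ≫ i := by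
    rw [Category.assoc, ← Category.assoc i p, hip, Category.id_comp]
  obtain ⟨eA, heA⟩ : ∃ eA : A' ⟶ A', f' ≫ (p ≫ i) = eA ≫ f' :=
    Pretriangulated.Triangle.coyoneda_exact₂ _ hT (f' ≫ (p ≫ i))
    (w.hom_orth (show m - 1 < n + 1 by omega) hA' hB' _)
  -- heA : f' ≫ (p ≫ i) = eA ≫ f'
  have key : eA ≫ f' = f' ≫ (p ≫ i) := heA.symm
  -- eA is idempotent
  have hidsq : (eA ≫ eA - eA) ≫ f' = 0 := by
    have : (eA ≫ eA) ≫ f' = eA ≫ f' := by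
      rw [Category.assoc, key, ← Category.assoc, key, Category.assoc, hpi]
    rw [Preadditive.sub_comp, this, sub_self]
  have hidem : eA ≫ eA = eA := by
    have h0 : ((shiftFunctor C (1 : ℤ)).map (eA ≫ eA - eA)) ≫
        f'⟦(1 : ℤ)⟧' = 0 := by
      rw [← Functor.map_comp, hidsq, Functor.map_zero]
    obtain ⟨τ, hτ⟩ : ∃ τ : (shiftFunctor C (1 : ℤ)).obj A' ⟶ B',
        (shiftFunctor C (1 : ℤ)).map (eA ≫ eA - eA) = τ ≫ h' :=
      Pretriangulated.Triangle.coyoneda_exact₁ _ hT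
      ((shiftFunctor C (1 : ℤ)).map (eA ≫ eA - eA)) h0
    have hA'1 : w.leW m ((shiftFunctor C (1 : ℤ)).obj A') := by
      have := w.leW_shift_one hA'
      rwa [show m - 1 + 1 = m from by ring] at this
    have hτ0 : τ = 0 :=
      w.hom_orth (show m < n + 1 by omega) hA'1 hB' τ
    have hmap0 : (shiftFunctor C (1 : ℤ)).map (eA ≫ eA - eA) = 0 := by
      rw [hτ, hτ0, zero_comp]
    refine sub_eq_zero.mp ((shiftFunctor C (1 : ℤ)).map_injective ?_)
    rw [hmap0, CategoryTheory.Functor.map_zero]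
  obtain ⟨A₁, ι, π, hιπ, hπι⟩ := IsIdempotentComplete.idempotents_split A' eA hidem
  have hA₁ : w.leW (m - 1) A₁ := w.leW_retract ι π hιπ hA'
  -- the candidate triangle
  obtain ⟨Z, G, H, hTZ⟩ := Pretriangulated.distinguished_cocone_triangle (ι ≫ f' ≫ p)
  have hZ : w.geW (n + 1) Z := by
    apply w.ge_of_orth
    intro W hW φ
    have hW' : w.leW n W := by
      have e : n + 1 - 1 = n := by ring
      rwa [e] at hW
    -- Step 1 : φ ≫ H = 0
    have hχ : φ ≫ H = 0 := by
      set σ := (φ ≫ H) ≫ (shiftFunctor C (1 : ℤ)).map ι with hσdef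
      have hιeA : ι ≫ eA = ι := by rw [← hπι, ← Category.assoc, hιπ, Category.id_comp]
      have hσe : σ ≫ (shiftFunctor C (1 : ℤ)).map eA = σ := by
        rw [hσdef, Category.assoc, ← Functor.map_comp, hιeA]
      have hσ1 : σ ≫ (shiftFunctor C (1 : ℤ)).map (f' ≫ p) = 0 := by
        rw [hσdef, Category.assoc, ← Functor.map_comp]
        have h31 : H ≫ (ι ≫ f' ≫ p)⟦(1 : ℤ)⟧' = 0 :=
          Pretriangulated.comp_distTriang_mor_zero₃₁ _ hTZ
        rw [Category.assoc, h31, comp_zero]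
      have hσ2 : σ ≫ (shiftFunctor C (1 : ℤ)).map f' = 0 := by
        conv_lhs => rw [← hσe]
        rw [Category.assoc, ← Functor.map_comp, key]
        have : (shiftFunctor C (1 : ℤ)).map (f' ≫ (p ≫ i)) =
            (shiftFunctor C (1 : ℤ)).map (f' ≫ p) ≫ (shiftFunctor C (1 : ℤ)).map i := by
          rw [← Functor.map_comp, Category.assoc]
        rw [this, ← Category.assoc, hσ1, zero_comp]
      obtain ⟨τ, hτ⟩ : ∃ τ : W ⟶ B', σ = τ ≫ h' :=
        Pretriangulated.Triangle.coyoneda_exact₃ _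
        (Pretriangulated.rot_of_distTriang _ hT) σ
        (by change σ ≫ (-((shiftFunctor C (1 : ℤ)).map f')) = 0; rw [Preadditive.comp_neg, hσ2, neg_zero])
      have hτ0 : τ = 0 := w.hom_orth (show n < n + 1 by omega) hW' hB' τ
      have hσ0 : σ = 0 := by rw [hτ, hτ0, zero_comp]
      have : φ ≫ H = σ ≫ (shiftFunctor C (1 : ℤ)).map π := by
        rw [hσdef, Category.assoc, ← Functor.map_comp, hιπ, CategoryTheory.Functor.map_id,
          Category.comp_id]
      rw [this, hσ0, zero_comp]
    -- Step 2 : φ factors through N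
    obtain ⟨φ', hφ'⟩ : ∃ φ' : W ⟶ N, φ = φ' ≫ G :=
      Pretriangulated.Triangle.coyoneda_exact₃ _ hTZ φ hχ
    -- Step 3 : φ' ≫ G = 0
    obtain ⟨ξ, hξ⟩ : ∃ ξ : W ⟶ A', φ' ≫ i = ξ ≫ f' :=
      Pretriangulated.Triangle.coyoneda_exact₂ _ hT (φ' ≫ i)
      (w.hom_orth (show n < n + 1 by omega) hW' hB' _)
    -- hξ : φ' ≫ i = ξ ≫ f'
    have h12 : (ι ≫ f' ≫ p) ≫ G = 0 :=
      Pretriangulated.comp_distTriang_mor_zero₁₂ _ hTZ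
    have h12' : ι ≫ f' ≫ p ≫ G = 0 := by simpa only [Category.assoc] using h12
    have k2 : f' ≫ p ≫ G = 0 := by
      have e2 : eA ≫ f' ≫ p ≫ G = f' ≫ p ≫ G := by
        rw [reassoc_of% key]
        slice_lhs 3 4 => rw [hip]
        simp
      rw [← hπι] at e2
      rw [Category.assoc] at e2
      rw [h12'] at e2
      rw [comp_zero] at e2
      exact e2.symm
    have hξ' : φ' ≫ i = ξ ≫ f' := hξ
    have hφ'' : φ = φ' ≫ G := hφ'
    have hφG : φ' ≫ G = 0 := by
      have e1 : φ' = (φ' ≫ i) ≫ p := by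
        rw [Category.assoc, hip]
        exact (Category.comp_id φ').symm
      rw [e1, hξ', Category.assoc, Category.assoc, k2, comp_zero]
    rw [hφ'', hφG]
  exact ⟨A₁, Z, ι ≫ f' ≫ p, G, H, hTZ, hA₁, hZ⟩

end Helpers

end WeightStructure

section FunctorHelpers

variable {C : Type*} [Category C] [HasZeroObject C] [Preadditive C]
    [HasShift C ℤ] [∀ n : ℤ, (shiftFunctor C n).Additive] [Pretriangulated C]
    {D : Type*} [Category D] [HasZeroObject D] [Preadditive D]
    [HasShift D ℤ] [∀ n : ℤ, (shiftFunctor D n).Additive] [Pretriangulated D]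
    {wC : WeightStructure C} {wD : WeightStructure D} {F : C ⥤ D}

lemma WeightExact.leW_map (hF : WeightExact wC wD F) [F.CommShift ℤ] {a : ℤ} {X : C}
    (h : wC.leW a X) : wD.leW a (F.obj X) :=
  wD.le_iso ((F.commShiftIso (-a : ℤ)).app X) (hF.1 _ h)

lemma WeightExact.geW_map (hF : WeightExact wC wD F) [F.CommShift ℤ] {b : ℤ} {X : C}
    (h : wC.geW b X) : wD.geW b (F.obj X) :=
  wD.ge_iso ((F.commShiftIso (-b : ℤ)).app X) (hF.2 _ h)

end FunctorHelpers

/-- **Proposition 2O, abstract form.** Let `g_* : C → D` and `g^* : D → C` be weight-exact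
exact functors between idempotent-complete pretriangulated categories with weight
structures, together with natural transformations `η : id → g^* g_*` and
`ε : g^* g_* → id` with `ε ∘ η = id` (so every `N` is naturally a direct factor of
`g^* g_* N`). Then `g_*` detects weights. -/
theorem direct_image_weight_conservative
    {C : Type*} [Category C] [HasZeroObject C] [Preadditive C]
    [HasShift C ℤ] [∀ n : ℤ, (shiftFunctor C n).Additive] [Pretriangulated C]
    [IsIdempotentComplete C]
    {D : Type*} [Category D] [HasZeroObject D] [Preadditive D]
    [HasShift D ℤ] [∀ n : ℤ, (shiftFunctor D n).Additive] [Pretriangulated D]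
    [IsIdempotentComplete D]
    (wC : WeightStructure C) (wD : WeightStructure D)
    (gst : C ⥤ D) (gs : D ⥤ C)
    [gst.CommShift ℤ] [gst.IsTriangulated] [gs.CommShift ℤ] [gs.IsTriangulated]
    (hgst : WeightExact wC wD gst) (hgs : WeightExact wD wC gs)
    (η : 𝟭 C ⟶ gst ⋙ gs) (ε : gst ⋙ gs ⟶ 𝟭 C) (hηε : η ≫ ε = 𝟙 (𝟭 C))
    (N : C) (α β : ℤ) (hαβ : α ≤ β) :
    (wC.heart N ↔ wD.heart (gst.obj N)) ∧
    (wC.leW α N ↔ wD.leW α (gst.obj N)) ∧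
    (wC.geW β N ↔ wD.geW β (gst.obj N)) ∧
    (wC.WithoutWeights α β N ↔ wD.WithoutWeights α β (gst.obj N)) := by
  have hr : η.app N ≫ ε.app N = 𝟙 N := by
    have := congrArg (fun (t : 𝟭 C ⟶ 𝟭 C) => t.app N) hηε
    simpa using this
  refine ⟨⟨fun h => ⟨hgst.1 N h.1, hgst.2 N h.2⟩, fun h => ?_⟩,
    ⟨fun h => hgst.leW_map h, fun h => ?_⟩,
    ⟨fun h => hgst.geW_map h, fun h => ?_⟩,
    ⟨fun h => ?_, fun h => ?_⟩⟩
  · exact ⟨wC.le_retract (η.app N) (ε.app N) hr (hgs.1 _ h.1),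
      wC.ge_retract (η.app N) (ε.app N) hr (hgs.2 _ h.2)⟩
  · exact wC.leW_retract (η.app N) (ε.app N) hr (hgs.leW_map h)
  · exact wC.geW_retract (η.app N) (ε.app N) hr (hgs.geW_map h)
  · -- forward direction for WithoutWeights
    obtain ⟨A, B, f, g, h', hT, hA, hB⟩ := h
    exact ⟨gst.obj A, gst.obj B, gst.map f, gst.map g,
      gst.map h' ≫ (gst.commShiftIso (1 : ℤ)).hom.app A,
      gst.map_distinguished _ hT, hgst.leW_map hA, hgst.geW_map hB⟩
  · -- backward direction for WithoutWeights
    obtain ⟨A, B, f, g, h', hT, hA, hB⟩ := h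
    have hM : wC.WithoutWeights α β (gs.obj (gst.obj N)) :=
      ⟨gs.obj A, gs.obj B, gs.map f, gs.map g,
        gs.map h' ≫ (gs.commShiftIso (1 : ℤ)).hom.app A,
        gs.map_distinguished _ hT, hgs.leW_map hA, hgs.geW_map hB⟩
    exact wC.withoutWeights_of_retract hαβ (η.app N) (ε.app N) hr hM
end

section
/- Let C be a pretriangulated category with weight structure, let A ∈ C_{w≤0} and B ∈ C_{w≥0}, and let u : A → B be any morphism. Then u factors as A → M → B with M an object of the heart C_{w=0}, pure of weight zero. (The factorization principle stated in the introduction: the axioms of a weight structure formally imply that any morphism from an object of weights ≤ 0 to an object of weights ≥ 0 factors over an object pure of weight zero.) -/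
set_option linter.unusedVariables false

open CategoryTheory Limits Pretriangulated

universe w₁ w₂ w₃ w₄ v₁ v₂ v₃ v₄ u₁ u₂ u₃ u₄

namespace WeightStructure

variable {C : Type*} [Category C] [HasZeroObject C] [Preadditive C]
    [HasShift C ℤ] [∀ n : ℤ, (shiftFunctor C n).Additive] [Pretriangulated C]

/-- `Hom(C_{w≤0}, C_{w≥1}) = 0`. -/
lemma hom_zero_of_le_of_ge_shift (w : WeightStructure C) {P Q : C}
    (hP : w.le P) (hQ : w.ge (Q⟦(-1 : ℤ)⟧)) (f : P ⟶ Q) : f = 0 := by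
  have e : (Q⟦(-1 : ℤ)⟧)⟦(1 : ℤ)⟧ ≅ Q := (shiftEquiv C (1 : ℤ)).counitIso.app Q
  have h0 : f ≫ e.inv = 0 := w.orth (f ≫ e.inv) hP hQ
  have : f = (f ≫ e.inv) ≫ e.hom := by simp
  rw [this, h0, Limits.zero_comp]

/-- `Hom(C_{w≤-1}, C_{w≥0}) = 0`. -/
lemma hom_zero_of_le_shift_of_ge (w : WeightStructure C) {P Q : C}
    (hP : w.le P) (hQ : w.ge Q) (f : P⟦(-1 : ℤ)⟧ ⟶ Q) : f = 0 := by
  have eP : (P⟦(-1 : ℤ)⟧)⟦(1 : ℤ)⟧ ≅ P := (shiftEquiv C (1 : ℤ)).counitIso.app P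
  have h0 : eP.inv ≫ (shiftFunctor C (1 : ℤ)).map f = 0 :=
    w.orth (eP.inv ≫ (shiftFunctor C (1 : ℤ)).map f) hP hQ
  have h1 : (shiftFunctor C (1 : ℤ)).map f = eP.hom ≫ (eP.inv ≫ (shiftFunctor C (1 : ℤ)).map f) := by
    simp
  rw [h0, Limits.comp_zero] at h1
  apply (shiftFunctor C (1 : ℤ)).map_injective
  rw [h1, Functor.map_zero]

/-- `C_{w≤0}` is closed under extensions. -/
lemma le_ext (w : WeightStructure C) {T : Triangle C} (hT : T ∈ distTriang C)
    (h1 : w.le T.obj₁) (h3 : w.le T.obj₃) : w.le T.obj₂ := by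
  obtain ⟨X, Y, f, g, h, hdt, hX, hY⟩ := w.exists_weight_filtration T.obj₂
  -- the map `g : T.obj₂ ⟶ Y` vanishes
  have hg : g = 0 := by
    have hg1 : T.mor₁ ≫ g = 0 := w.hom_zero_of_le_of_ge_shift h1 hY _
    obtain ⟨t, ht⟩ := Triangle.yoneda_exact₂ T hT g hg1
    have ht0 : t = 0 := w.hom_zero_of_le_of_ge_shift h3 hY t
    rw [ht, ht0, Limits.comp_zero]
  -- hence `T.obj₂` is a retract of `X`
  obtain ⟨r, hr⟩ := Triangle.coyoneda_exact₂ _ hdt (𝟙 T.obj₂) (by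
    change 𝟙 T.obj₂ ≫ g = 0; rw [hg, Limits.comp_zero])
  exact w.le_retract r f hr.symm hX

end WeightStructure

/-- **Factorization through the heart.** In a pretriangulated category with a weight
structure, any morphism `u : A → B` with `A ∈ C_{w≤0}` and `B ∈ C_{w≥0}` factors through
an object `M` of the heart, pure of weight zero. -/
theorem morphism_factors_through_heart
    {C : Type*} [Category C] [HasZeroObject C] [Preadditive C]
    [HasShift C ℤ] [∀ n : ℤ, (shiftFunctor C n).Additive] [Pretriangulated C]
    (w : WeightStructure C)
    (A B : C) (hA : w.le A) (hB : w.ge B) (u : A ⟶ B) :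
    ∃ (M : C) (p : A ⟶ M) (q : M ⟶ B), w.heart M ∧ p ≫ q = u := by
  -- weight decomposition of `A⟦1⟧`
  obtain ⟨X, Y, f, g, h, hdt, hX, hY⟩ := w.exists_weight_filtration (A⟦(1 : ℤ)⟧)
  -- shift the triangle by `-1`
  have hdt1 := Triangle.shift_distinguished _ hdt (-1)
  set T1 := (shiftFunctor (Triangle C) (-1 : ℤ)).obj (Triangle.mk f g h) with hT1
  have e : (A⟦(1 : ℤ)⟧)⟦(-1 : ℤ)⟧ ≅ A := ((shiftEquiv C (1 : ℤ)).unitIso.app A).symm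
  have m1 : (X⟦(-1 : ℤ)⟧ ⟶ (A⟦(1 : ℤ)⟧)⟦(-1 : ℤ)⟧) := T1.mor₁
  have m2 : ((A⟦(1 : ℤ)⟧)⟦(-1 : ℤ)⟧ ⟶ Y⟦(-1 : ℤ)⟧) := T1.mor₂
  -- replace the middle object by `A`
  set T2 : Triangle C := Triangle.mk (T1.mor₁ ≫ e.hom) (e.inv ≫ T1.mor₂) T1.mor₃ with hT2
  have hdt2 : T2 ∈ distTriang C := by
    refine isomorphic_distinguished _ hdt1 _ ?_
    exact Triangle.isoMk T2 T1 (Iso.refl _) e.symm (Iso.refl _)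
      (by dsimp [T2]; exact (by simp : ∀ {Z : C} (a : Z ⟶ (A⟦(1 : ℤ)⟧)⟦(-1 : ℤ)⟧), (a ≫ e.hom) ≫ e.inv = 𝟙 Z ≫ a) T1.mor₁)
      (by dsimp [T2]; exact Category.comp_id _)
      (by dsimp [T2]; exact (by simp : ∀ {P R : C} (a : P ⟶ R⟦(1 : ℤ)⟧), a ≫ (shiftFunctor C (1 : ℤ)).map (𝟙 R) = 𝟙 P ≫ a) T1.mor₃)
  -- the composite `X⟦-1⟧ ⟶ A ⟶ B` vanishes
  have hcomp : T2.mor₁ ≫ u = 0 := w.hom_zero_of_le_shift_of_ge hX hB (T2.mor₁ ≫ u)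
  -- hence `u` factors through `Y⟦-1⟧`
  obtain ⟨q, hq⟩ := Triangle.yoneda_exact₂ T2 hdt2 u hcomp
  refine ⟨Y⟦(-1 : ℤ)⟧, T2.mor₂, q, ⟨?_, hY⟩, hq.symm⟩
  -- `Y⟦-1⟧` lies in `C_{w≤0}` since it is an extension of `X⟦-1⟧⟦1⟧` by `A`
  refine w.le_ext (rot_of_distTriang _ hdt2) hA ?_
  exact w.le_iso ((shiftEquiv C (1 : ℤ)).counitIso.app X).symm hX
end
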